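/- For c > 0 and all λ ∈ [0, 3/c): (e^{cλ} − cλ − 1)/c² ≤ λ²/(2(1 − cλ/3)); i.e., any sub-Poisson process with scale c is sub-gamma with scale c/3 and the same variance process. -/

import Mathlib

noncomputable def Faux : ℝ → ℝ := fun x => x^2 - (2 - 2*x/3)*(Real.exp x - x - 1)
noncomputable def Faux' : ℝ → ℝ := fun x =>
  2*x + (2/3)*(Real.exp x - x - 1) - (2 - 2*x/3)*(Real.exp x - 1)

lemma hFaux (x : ℝ) : HasDerivAt Faux (Faux' x) x := by
  have h1 : HasDerivAt (fun x : ℝ => x^2) (2*x) x := by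
    simpa using (hasDerivAt_pow 2 x)
  have h2 : HasDerivAt (fun x : ℝ => 2 - 2*x/3) (-(2/3)) x := by
    have := ((hasDerivAt_id x).const_mul (2:ℝ)).div_const 3
    have := (hasDerivAt_const x (2:ℝ)).fun_sub this
    refine this.congr_deriv ?_; ring
  have h3 : HasDerivAt (fun x : ℝ => Real.exp x - x - 1) (Real.exp x - 1) x := by
    simpa using ((Real.hasDerivAt_exp x).fun_sub (hasDerivAt_id x)).fun_sub (hasDerivAt_const x 1)
  have := h1.fun_sub (h2.fun_mul h3)
  refine this.congr_deriv ?_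
  unfold Faux'; ring

lemma hFaux' (x : ℝ) : HasDerivAt Faux' (2/3*(1 + (x-1)*Real.exp x)) x := by
  have h2 : HasDerivAt (fun x : ℝ => 2 - 2*x/3) (-(2/3)) x := by
    have := ((hasDerivAt_id x).const_mul (2:ℝ)).div_const 3
    have := (hasDerivAt_const x (2:ℝ)).fun_sub this
    refine this.congr_deriv ?_; ring
  have h3 : HasDerivAt (fun x : ℝ => Real.exp x - x - 1) (Real.exp x - 1) x := by
    simpa using ((Real.hasDerivAt_exp x).fun_sub (hasDerivAt_id x)).fun_sub (hasDerivAt_const x 1)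
  have h4 : HasDerivAt (fun x : ℝ => Real.exp x - 1) (Real.exp x) x := by
    simpa using (Real.hasDerivAt_exp x).fun_sub (hasDerivAt_const x 1)
  have h1 : HasDerivAt (fun x : ℝ => 2*x) 2 x := by
    simpa using (hasDerivAt_id x).const_mul (2:ℝ)
  have := (h1.fun_add (h3.const_mul (2/3:ℝ))).fun_sub (h2.fun_mul h4)
  refine this.congr_deriv ?_
  ring

lemma snd_nonneg (x : ℝ) : 0 ≤ 2/3*(1 + (x-1)*Real.exp x) := by
  have h : 1 - x ≤ Real.exp (-x) := by
    have := Real.add_one_le_exp (-x); linarith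
  have he : 0 < Real.exp x := Real.exp_pos x
  have : (1 - x) * Real.exp x ≤ Real.exp (-x) * Real.exp x :=
    mul_le_mul_of_nonneg_right h he.le
  rw [← Real.exp_add] at this
  simp at this
  nlinarith

lemma F'_nonneg {x : ℝ} (hx : 0 ≤ x) : 0 ≤ Faux' x := by
  have hmono : MonotoneOn Faux' (Set.Ici 0) := by
    apply monotoneOn_of_deriv_nonneg (convex_Ici 0)
    · exact fun y _ => (hFaux' y).continuousAt.continuousWithinAt
    · exact fun y _ => (hFaux' y).differentiableAt.differentiableWithinAt
    · intro y _
      rw [(hFaux' y).deriv]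
      exact snd_nonneg y
  have h0 : Faux' 0 = 0 := by unfold Faux'; simp [Real.exp_zero]
  have := hmono (Set.self_mem_Ici) (Set.mem_Ici.mpr hx) hx
  linarith [h0 ▸ this]

lemma F_nonneg {x : ℝ} (hx : 0 ≤ x) : 0 ≤ Faux x := by
  have hmono : MonotoneOn Faux (Set.Ici 0) := by
    apply monotoneOn_of_deriv_nonneg (convex_Ici 0)
    · exact fun y _ => (hFaux y).continuousAt.continuousWithinAt
    · exact fun y _ => (hFaux y).differentiableAt.differentiableWithinAt
    · intro y hy
      rw [(hFaux y).deriv]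
      exact F'_nonneg (le_of_lt (by simpa [interior_Ici] using hy))
  have h0 : Faux 0 = 0 := by unfold Faux; simp [Real.exp_zero]
  have := hmono (Set.self_mem_Ici) (Set.mem_Ici.mpr hx) hx
  linarith [h0 ▸ this]

/-- For `c > 0` and all `λ ∈ [0, 3/c)`:
`(e^{cλ} − cλ − 1)/c² ≤ λ²/(2(1 − cλ/3))`; i.e. `ψ_{P,c} ≤ ψ_{G,c/3}`, so any
sub-Poisson process with scale `c` is sub-gamma with scale `c/3` and the same
variance process. -/
theorem subPoisson_le_subGamma (c l : ℝ) (hc : 0 < c) (hl0 : 0 ≤ l) (hl : l < 3 / c) :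
    (Real.exp (c * l) - c * l - 1) / c ^ 2 ≤ l ^ 2 / (2 * (1 - c * l / 3)) := by
  have hx : 0 ≤ c * l := mul_nonneg hc.le hl0
  have hx3 : c * l < 3 := by
    have := (lt_div_iff₀ hc).mp hl
    nlinarith
  have hkey := F_nonneg hx
  unfold Faux at hkey
  have hden : 0 < 2 * (1 - c * l / 3) := by linarith
  have hc2 : 0 < c ^ 2 := by positivity
  rw [div_le_div_iff₀ hc2 hden]
  nlinarith [hkey]
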